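/- Let ε be irrational, n ≥ 1, and let P₀,…,P_m ∈ ℝ^m be points of the form P_l = (i₁^{(l)}/(n-k^{(l)}+ε), …, i_m^{(l)}/(n-k^{(l)}+ε)) with i_j^{(l)}, k^{(l)} nonnegative integers and k^{(l)} < n. Suppose the m+1 points P₀,…,P_m lie on a common affine hyperplane of ℝ^m. Then the (m+1)×(m+1) integer matrices with rows (n-k^{(l)}, i₁^{(l)},…,i_m^{(l)}) and with rows (1, i₁^{(l)},…,i_m^{(l)}) both have determinant zero. -/

import Mathlib

/-- if m+1 perturbed projections lie on a common affine
hyperplane, then both associated integer determinants vanish. -/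
theorem stmt13 (m n : ℕ) (hn : 1 ≤ n) (ε : ℝ) (hε : Irrational ε)
    (i : Fin (m + 1) → Fin m → ℕ) (k : Fin (m + 1) → ℕ) (hk : ∀ l, k l < n)
    (A : Fin m → ℝ) (B : ℝ) (hA : A ≠ 0)
    (hplane : ∀ l, ∑ s, A s * ((i l s : ℝ) / ((n : ℝ) - k l + ε)) = B) :
    Matrix.det
      (Matrix.of (fun l => Fin.cons ((n : ℤ) - (k l : ℤ)) (fun s => (i l s : ℤ))) :
        Matrix (Fin (m + 1)) (Fin (m + 1)) ℤ) = 0 ∧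
    Matrix.det
      (Matrix.of (fun l => Fin.cons (1 : ℤ) (fun s => (i l s : ℤ))) :
        Matrix (Fin (m + 1)) (Fin (m + 1)) ℤ) = 0 := by
  set N1 : Matrix (Fin (m + 1)) (Fin (m + 1)) ℤ :=
    Matrix.of (fun l => Fin.cons ((n : ℤ) - (k l : ℤ)) (fun s => (i l s : ℤ))) with hN1
  set N2 : Matrix (Fin (m + 1)) (Fin (m + 1)) ℤ :=
    Matrix.of (fun l => Fin.cons (1 : ℤ) (fun s => (i l s : ℤ))) with hN2
  -- real versions
  set M1 : Matrix (Fin (m + 1)) (Fin (m + 1)) ℝ := N1.map (Int.cast) with hM1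
  set M2 : Matrix (Fin (m + 1)) (Fin (m + 1)) ℝ := N2.map (Int.cast) with hM2
  set Mε : Matrix (Fin (m + 1)) (Fin (m + 1)) ℝ :=
    Matrix.of (fun l => Fin.cons ((n : ℝ) - k l + ε) (fun s => (i l s : ℝ))) with hMε
  have hcne : ∀ l, ((n : ℝ) - k l + ε) ≠ 0 := by
    intro l h0
    apply hε.ne_int ((k l : ℤ) - (n : ℤ))
    push_cast
    linarith
  -- det Mε = 0
  have hdet0 : Mε.det = 0 := by
    rw [← Matrix.exists_mulVec_eq_zero_iff]
    refine ⟨Fin.cons (-B) A, ?_, ?_⟩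
    · intro h
      apply hA
      funext s
      have := congrFun h s.succ
      simpa [Fin.cons_succ] using this
    · funext l
      have h1 : ∑ s, A s * (i l s : ℝ) = B * ((n : ℝ) - k l + ε) := by
        have h := hplane l
        have h2 : (∑ s, A s * ((i l s : ℝ) / ((n : ℝ) - k l + ε))) * ((n : ℝ) - k l + ε)
            = B * ((n : ℝ) - k l + ε) := by rw [h]
        rw [Finset.sum_mul] at h2
        rw [← h2]
        apply Finset.sum_congr rfl
        intro s _
        rw [mul_assoc, div_mul_cancel₀ _ (hcne l)]
      simp only [Matrix.mulVec, dotProduct, hMε, Matrix.of_apply,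
        Fin.sum_univ_succ, Fin.cons_zero, Fin.cons_succ, Pi.zero_apply]
      have h3 : ∑ s : Fin m, (i l s : ℝ) * A s = ∑ s : Fin m, A s * (i l s : ℝ) :=
        Finset.sum_congr rfl fun s _ => mul_comm _ _
      rw [h3, h1]
      ring
  -- column decomposition
  have hdecomp : Mε = M1.updateCol 0
      ((fun l => ((n : ℤ) - (k l : ℤ) : ℝ)) + ε • (fun _ => (1 : ℝ))) := by
    ext l j
    refine Fin.cases ?_ ?_ j
    · simp [Matrix.updateCol_apply, hMε]
    · intro s
      simp [Matrix.updateCol_apply, hMε, hM1, hN1, Fin.succ_ne_zero]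
  have hself : M1.updateCol 0 (fun l => ((n : ℤ) - (k l : ℤ) : ℝ)) = M1 := by
    have : (fun l => ((n : ℤ) - (k l : ℤ) : ℝ)) = fun l => M1 l 0 := by
      funext l
      simp [hM1, hN1]
    rw [this, Matrix.updateCol_eq_self]
  have hones : M1.updateCol 0 (fun _ => (1 : ℝ)) = M2 := by
    ext l j
    refine Fin.cases ?_ ?_ j
    · simp [Matrix.updateCol_apply, hM2, hN2]
    · intro s
      simp [Matrix.updateCol_apply, hM1, hM2, hN1, hN2, Fin.succ_ne_zero]
  have hsplit : Mε.det = M1.det + ε * M2.det := by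
    rw [hdecomp, Matrix.det_updateCol_add, hself, Matrix.det_updateCol_smul,
      hones]
  have hmap1 : M1.det = ((N1.det : ℤ) : ℝ) := by
    exact (RingHom.map_det (Int.castRingHom ℝ) N1).symm
  have hmap2 : M2.det = ((N2.det : ℤ) : ℝ) := by
    exact (RingHom.map_det (Int.castRingHom ℝ) N2).symm
  have key : ((N1.det : ℤ) : ℝ) + ε * ((N2.det : ℤ) : ℝ) = 0 := by
    rw [← hmap1, ← hmap2, ← hsplit, hdet0]
  have h2 : N2.det = 0 := by
    by_contra h2
    apply hε
    refine ⟨(-(N1.det : ℚ)) / (N2.det : ℚ), ?_⟩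
    have hD2 : ((N2.det : ℤ) : ℝ) ≠ 0 := Int.cast_ne_zero.mpr h2
    rw [Rat.cast_div, Rat.cast_neg, Rat.cast_intCast, Rat.cast_intCast]
    field_simp
    linarith
  refine ⟨?_, h2⟩
  have : ((N1.det : ℤ) : ℝ) = 0 := by
    rw [h2] at key
    simpa using key
  exact_mod_cast this
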